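/- arXiv:2309.09239 — 2 statements merged into one kernel-verified Lean document; each statement's English description precedes it below -/
import Mathlib

section
/- Let H : ℝⁿ → ℝ be differentiable with L-Lipschitz gradient, F proper lower semicontinuous, τ > 0, and suppose x⁺ minimizes w ↦ F(w) + ⟨∇H(y), w - y⟩ + (τ/2)‖w - y‖². Then the vector g = ∇H(x⁺) - ∇H(y) + τ(y - x⁺) belongs to the Fréchet subdifferential of H + F at x⁺, and ‖g‖ ≤ (L + τ)‖x⁺ - y‖. -/
open Filter Topology RealInnerProductSpace

/-- `u` is a Fréchet subgradient of `f` at `x`. -/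
def HasFrechetSubgradAt {n : ℕ} (f : EuclideanSpace ℝ (Fin n) → EReal)
    (x u : EuclideanSpace ℝ (Fin n)) : Prop :=
  ∀ ε : ℝ, 0 < ε → ∀ᶠ y in 𝓝[≠] x,
    f x + ((⟪u, y - x⟫ - ε * ‖y - x‖ : ℝ) : EReal) ≤ f y

/-- Subgradient lower bound for one proximal-linearized step: if `x⁺` minimizes
`w ↦ F w + ⟪∇H y, w - y⟫ + (τ/2)‖w - y‖²`, then
`g = ∇H(x⁺) - ∇H(y) + τ(y - x⁺)` is a Fréchet subgradient of `H + F` at `x⁺`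
with `‖g‖ ≤ (L + τ)‖x⁺ - y‖`. -/
theorem prox_step_subgradient_bound {n : ℕ}
    (H : EuclideanSpace ℝ (Fin n) → ℝ)
    (H' : EuclideanSpace ℝ (Fin n) → EuclideanSpace ℝ (Fin n))
    (L τ : ℝ) (hτ : 0 < τ)
    (hgrad : ∀ x, HasGradientAt H (H' x) x)
    (hlip : ∀ x y, ‖H' x - H' y‖ ≤ L * ‖x - y‖)
    (F : EuclideanSpace ℝ (Fin n) → EReal)
    (hproper : ∃ x, F x ≠ ⊤) (hnobot : ∀ x, F x ≠ ⊥)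
    (hlsc : LowerSemicontinuous F)
    (y xplus : EuclideanSpace ℝ (Fin n))
    (hmin : ∀ w, F xplus + ((⟪H' y, xplus - y⟫ + τ / 2 * ‖xplus - y‖ ^ 2 : ℝ) : EReal)
      ≤ F w + ((⟪H' y, w - y⟫ + τ / 2 * ‖w - y‖ ^ 2 : ℝ) : EReal)) :
    HasFrechetSubgradAt (fun x => ((H x : ℝ) : EReal) + F x) xplus
      (H' xplus - H' y + τ • (y - xplus)) ∧
    ‖H' xplus - H' y + τ • (y - xplus)‖ ≤ (L + τ) * ‖xplus - y‖ := by
  set g := H' xplus - H' y + τ • (y - xplus) with hg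
  -- F xplus is finite
  have hFtop : F xplus ≠ ⊤ := by
    intro htop
    obtain ⟨x₀, hx₀⟩ := hproper
    have h := hmin x₀
    rw [htop, EReal.top_add_coe] at h
    have : F x₀ + ((⟪H' y, x₀ - y⟫ + τ / 2 * ‖x₀ - y‖ ^ 2 : ℝ) : EReal) < ⊤ :=
      EReal.add_lt_top hx₀ (EReal.coe_ne_top _)
    exact (ne_of_lt this) (top_le_iff.1 h)
  obtain ⟨f₀, hf₀⟩ : ∃ r : ℝ, F xplus = (r : EReal) := by
    lift F xplus to ℝ using ⟨hFtop, hnobot xplus⟩ with r hr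
    exact ⟨r, rfl⟩
  constructor
  · intro ε hε
    have hlo := hasGradientAt_iff_isLittleO.1 (hgrad xplus)
    have hev1 : ∀ᶠ w in 𝓝 xplus,
        ‖H w - H xplus - ⟪H' xplus, w - xplus⟫‖ ≤ ε / 2 * ‖w - xplus‖ :=
      hlo.def (by linarith)
    have hev2 : ∀ᶠ w in 𝓝 xplus, ‖w - xplus‖ ≤ ε / τ := by
      have : Metric.closedBall xplus (ε / τ) ∈ 𝓝 xplus :=
        Metric.closedBall_mem_nhds _ (div_pos hε hτ)
      filter_upwards [this] with w hw
      simpa [dist_eq_norm] using hw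
    filter_upwards [(hev1.and hev2).filter_mono nhdsWithin_le_nhds] with w hw
    obtain ⟨hw1, hw2⟩ := hw
    rcases eq_or_ne (F w) ⊤ with htop | htop
    · rw [htop]
      rw [EReal.add_top_of_ne_bot (EReal.coe_ne_bot _)]
      exact le_top
    obtain ⟨fw, hfw⟩ : ∃ r : ℝ, F w = (r : EReal) := by
      lift F w to ℝ using ⟨htop, hnobot w⟩ with r hr
      exact ⟨r, rfl⟩
    have hm := hmin w
    rw [hf₀, hfw, ← EReal.coe_add, ← EReal.coe_add, EReal.coe_le_coe_iff] at hm
    rw [hf₀, hfw, ← EReal.coe_add, ← EReal.coe_add, ← EReal.coe_add, EReal.coe_le_coe_iff]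
    -- expand norms and inner products
    have hexp : ‖w - y‖ ^ 2 = ‖w - xplus‖ ^ 2 + 2 * ⟪w - xplus, xplus - y⟫ + ‖xplus - y‖ ^ 2 := by
      have : w - y = (w - xplus) + (xplus - y) := by abel
      rw [this, norm_add_sq_real]
    have hwy : ⟪H' y, w - y⟫ = ⟪H' y, w - xplus⟫ + ⟪H' y, xplus - y⟫ := by
      have : w - y = (w - xplus) + (xplus - y) := by abel
      rw [this, inner_add_right]
    have hginner : ⟪g, w - xplus⟫
        = ⟪H' xplus, w - xplus⟫ - ⟪H' y, w - xplus⟫ - τ * ⟪xplus - y, w - xplus⟫ := by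
      rw [hg]
      rw [inner_add_left, inner_sub_left, inner_smul_left]
      have : ⟪y - xplus, w - xplus⟫ = -⟪xplus - y, w - xplus⟫ := by
        rw [← inner_neg_left]; congr 1; abel
      rw [this]; simp only [starRingEnd_apply, star_trivial]; ring
    have hsym : ⟪w - xplus, xplus - y⟫ = ⟪xplus - y, w - xplus⟫ := real_inner_comm _ _
    have habs : H xplus + ⟪H' xplus, w - xplus⟫ - ε / 2 * ‖w - xplus‖ ≤ H w := by
      have := hw1
      rw [Real.norm_eq_abs] at this
      have := abs_le.1 this
      linarith [this.1]
    have hsq : τ / 2 * ‖w - xplus‖ ^ 2 ≤ ε / 2 * ‖w - xplus‖ := by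
      have h3 : ‖w - xplus‖ * τ ≤ ε := (le_div_iff₀ hτ).1 hw2
      nlinarith [mul_le_mul_of_nonneg_left h3 (norm_nonneg (w - xplus))]
    rw [hexp, hwy, hsym] at hm
    rw [hginner]
    linarith [hm, habs, hsq]
  · have h1 := hlip xplus y
    calc ‖g‖ ≤ ‖H' xplus - H' y‖ + ‖τ • (y - xplus)‖ := norm_add_le _ _
      _ = ‖H' xplus - H' y‖ + τ * ‖xplus - y‖ := by
          rw [norm_smul, Real.norm_eq_abs, abs_of_pos hτ, norm_sub_rev y xplus]
      _ ≤ (L + τ) * ‖xplus - y‖ := by linarith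
end

section
/- Let (rₖ) be a nonincreasing sequence of positive reals satisfying r_{k}^{2θ - 1} ≤ d·(r_{k-1} - r_k) for some constant d > 0 and θ ∈ [1/2, 1). Then there exists q ∈ (0,1) (specifically q = d/(1+d) when θ = 1/2) such that rₖ ≤ q r_{k-1} for all sufficiently large k, hence (rₖ) converges to 0 at a linear rate. -/
open Filter Topology

/-- KŁ linear rate: if `(rₖ)` is positive, nonincreasing, and satisfies
`rₖ^(2θ-1) ≤ d (r_{k-1} - rₖ)` with `θ ∈ [1/2, 1)` and `d > 0`, then `(rₖ)`
eventually contracts by a factor `q ∈ (0,1)` and converges to `0`. -/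
theorem kl_linear_rate
    (r : ℕ → ℝ) (θ d : ℝ) (hθ1 : 1 / 2 ≤ θ) (hθ2 : θ < 1) (hd : 0 < d)
    (hpos : ∀ k, 0 < r k) (hmono : ∀ k, r (k + 1) ≤ r k)
    (hrec : ∀ k : ℕ, 1 ≤ k → r k ^ (2 * θ - 1) ≤ d * (r (k - 1) - r k)) :
    (∃ q : ℝ, q ∈ Set.Ioo (0 : ℝ) 1 ∧ ∃ N : ℕ, ∀ k ≥ N, 1 ≤ k →
      r k ≤ q * r (k - 1)) ∧
    Tendsto r atTop (𝓝 0) := by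
  set α : ℝ := 2 * θ - 1 with hαdef
  have hα0 : 0 ≤ α := by simp only [hαdef]; linarith
  have hα1 : α < 1 := by simp only [hαdef]; linarith
  have hanti : Antitone r := antitone_nat_of_succ_le hmono
  have htend : Tendsto r atTop (𝓝 0) := by
    rcases eq_or_lt_of_le hα0 with h0 | h0
    · exfalso
      have step : ∀ k : ℕ, r k ≤ r 0 - k * (1 / d) := by
        intro k
        induction k with
        | zero => simp
        | succ n ih =>
          have h := hrec (n + 1) (by omega)
          simp only [Nat.add_sub_cancel] at h
          rw [← h0, Real.rpow_zero] at h
          have hdiff : 1 / d ≤ r n - r (n + 1) := by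
            rw [div_le_iff₀ hd]; linarith
          push_cast
          linarith
      obtain ⟨n, hn⟩ := exists_nat_gt (r 0 * d)
      have h1 := hpos n
      have h2 := step n
      have h3 : (n : ℝ) * (1 / d) ≤ r 0 := by linarith
      rw [mul_one_div, div_le_iff₀ hd] at h3
      linarith
    · have hbdd : BddBelow (Set.range r) := by
        refine ⟨0, ?_⟩
        rintro x ⟨k, rfl⟩
        exact (hpos k).le
      have hL : Tendsto r atTop (𝓝 (⨅ i, r i)) := tendsto_atTop_ciInf hanti hbdd
      set L : ℝ := ⨅ i, r i with hLdef
      have hL0 : 0 ≤ L := le_ciInf fun i => (hpos i).le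
      have hL1 : Tendsto (fun k => r (k + 1)) atTop (𝓝 L) :=
        hL.comp (tendsto_add_atTop_nat 1)
      have hdiff : Tendsto (fun k => d * (r k - r (k + 1))) atTop (𝓝 0) := by
        have := (hL.sub hL1).const_mul d
        simpa using this
      have hrp : Tendsto (fun k => r (k + 1) ^ α) atTop (𝓝 (L ^ α)) :=
        hL1.rpow_const (Or.inr hα0)
      have hle : L ^ α ≤ 0 := by
        refine le_of_tendsto_of_tendsto' hrp hdiff fun k => ?_
        have h := hrec (k + 1) (by omega)
        simpa using h
      have hLα : L ^ α = 0 :=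
        le_antisymm hle (Real.rpow_nonneg hL0 α)
      have hLz : L = 0 := by
        rw [Real.rpow_eq_zero hL0 (ne_of_gt h0)] at hLα
        exact hLα
      rwa [hLz] at hL
  refine ⟨⟨d / (1 + d), ⟨div_pos hd (by linarith), (div_lt_one (by linarith)).2 (by linarith)⟩, ?_⟩, htend⟩
  have hev : ∀ᶠ k in atTop, r k < 1 := htend.eventually_lt_const one_pos
  obtain ⟨N, hN⟩ := eventually_atTop.1 hev
  refine ⟨N, fun k hk hk1 => ?_⟩
  have hrk1 : r k < 1 := hN k hk
  have h1 : r k ≤ r k ^ α := by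
    have := Real.rpow_le_rpow_of_exponent_ge (hpos k) hrk1.le hα1.le
    rwa [Real.rpow_one] at this
  have h2 := hrec k hk1
  have h3 : r k ≤ d * (r (k - 1) - r k) := le_trans h1 h2
  rw [div_mul_eq_mul_div, le_div_iff₀ (by linarith : (0:ℝ) < 1 + d)]
  linarith
end
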